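/- Let (A,R) be a unital Rota–Baxter algebra of weight θ, R̃ := θ·Id − R, x ∈ A, and let f, h ∈ A[[λ]] be the unique solutions of f = 1 + λR(f·x) and h = 1 + λR̃(x·h). Then Atkinson's factorisation holds: 1 − λθx = f⁻¹ · h⁻¹ in A[[λ]], where f⁻¹ = 1 − λR(x·h) and h⁻¹ = 1 − λR̃(f·x). -/

import Mathlib

open Finset PowerSeries

theorem atkinson_aux {k A : Type*} [Field k] [Ring A] [Algebra k A]
    (θ : k) (R : A →ₗ[k] A)
    (hR : ∀ a b : A, R a * R b = R (R a * b + a * R b - θ • (a * b)))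
    (x : A) (F H : ℕ → A) (hF0 : F 0 = 1) (hH0 : H 0 = 1)
    (hFs : ∀ n, F (n + 1) = R (F n * x))
    (hHs : ∀ n, H (n + 1) = θ • (x * H n) - R (x * H n)) :
    ∀ n : ℕ,
      (F (n + 1) = ∑ i ∈ range (n + 1), R (x * H i) * F (n - i)) ∧
      (H (n + 1) = ∑ i ∈ range (n + 1), H i * (θ • (F (n - i) * x) - R (F (n - i) * x))) := by
  have id3 : ∀ u v : A, R (R u * v) = R u * R v - R (u * R v) + θ • R (u * v) := by
    intro u v; rw [hR u v]; simp only [map_add, map_sub, map_smul]; abel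
  have id2 : ∀ u v : A, θ • (u * (θ • v - R v)) - R (u * (θ • v - R v)) =
      (θ • u - R u) * (θ • v - R v) + (θ • (R u * v) - R (R u * v)) := by
    intro u v
    simp only [mul_sub, sub_mul, smul_sub, map_sub, hR u v, map_add, map_smul,
      mul_smul_comm, smul_mul_assoc, smul_smul]
    abel
  intro n
  induction n with
  | zero =>
      constructor
      · simp [hFs, hF0, hH0]
      · simp [hHs, hF0, hH0]
  | succ n ih =>
      obtain ⟨ihF, ihH⟩ := ih
      have key : ∀ i ∈ range (n + 1), n + 1 - i = n - i + 1 := fun i hi =>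
        Nat.succ_sub (Nat.lt_succ_iff.mp (mem_range.mp hi))
      constructor
      · -- F (n+2)
        have step : ∀ i ∈ range (n + 1),
            R (R (x * H i) * F (n - i) * x) =
              R (x * H i) * F (n - i + 1) +
                R (x * (H i * (θ • (F (n - i) * x) - R (F (n - i) * x)))) := by
          intro i _
          rw [mul_assoc, id3 (x * H i) (F (n - i) * x), hFs (n - i)]
          simp only [mul_sub, mul_smul_comm, map_sub, map_smul, mul_assoc]
          abel
        have e2 : ∑ i ∈ range (n + 1), R (x * H i) * F (n + 1 - i) =
            ∑ i ∈ range (n + 1), R (x * H i) * F (n - i + 1) :=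
          Finset.sum_congr rfl fun i hi => by rw [key i hi]
        rw [hFs, ihF, Finset.sum_mul, map_sum, Finset.sum_congr rfl step,
          Finset.sum_add_distrib,
          Finset.sum_range_succ (fun i => R (x * H i) * F (n + 1 - i)) (n + 1),
          Nat.sub_self, hF0, mul_one, e2, ihH,
          Finset.mul_sum, map_sum]
      · -- H (n+2)
        have step2 : ∀ i ∈ range (n + 1),
            θ • (x * (H i * (θ • (F (n - i) * x) - R (F (n - i) * x)))) -
              R (x * (H i * (θ • (F (n - i) * x) - R (F (n - i) * x)))) =
            H (i + 1) * (θ • (F (n - i) * x) - R (F (n - i) * x)) +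
              (θ • (R (x * H i) * F (n - i) * x) - R (R (x * H i) * F (n - i) * x)) := by
          intro i _
          rw [← mul_assoc x (H i), id2 (x * H i) (F (n - i) * x), ← hHs i, ← mul_assoc]
        rw [hHs, ihH, Finset.mul_sum, Finset.smul_sum, map_sum, ← Finset.sum_sub_distrib,
          Finset.sum_congr rfl step2, Finset.sum_add_distrib, Finset.sum_sub_distrib,
          ← Finset.smul_sum, ← map_sum, ← Finset.sum_mul, ← ihF,
          Finset.sum_range_succ' (fun i => H i * (θ • (F (n + 1 - i) * x) - R (F (n + 1 - i) * x))) (n + 1)]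
        simp only [Nat.succ_sub_succ, Nat.sub_zero, hH0, one_mul]

theorem atkinson_aux2 {k A : Type*} [Field k] [Ring A] [Algebra k A]
    (θ : k) (R : A →ₗ[k] A)
    (hR : ∀ a b : A, R a * R b = R (R a * b + a * R b - θ • (a * b)))
    (x : A) (F H : ℕ → A) (hF0 : F 0 = 1) (hH0 : H 0 = 1)
    (hFs : ∀ n, F (n + 1) = R (F n * x))
    (hHs : ∀ n, H (n + 1) = θ • (x * H n) - R (x * H n)) (n : ℕ) :
    R (x * H (n + 1)) + (θ • (F (n + 1) * x) - R (F (n + 1) * x)) =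
      ∑ i ∈ range (n + 1), R (x * H i) * (θ • (F (n - i) * x) - R (F (n - i) * x)) := by
  obtain ⟨hF, hH⟩ := atkinson_aux θ R hR x F H hF0 hH0 hFs hHs n
  have id1 : ∀ u v : A, R u * (θ • v - R v) =
      (θ • (R u * v) - R (R u * v)) + R (u * (θ • v - R v)) := by
    intro u v
    simp only [mul_sub, map_sub, hR u v, map_add, map_smul, mul_smul_comm, smul_mul_assoc]
    abel
  have step : ∀ i ∈ range (n + 1),
      R (x * H i) * (θ • (F (n - i) * x) - R (F (n - i) * x)) =
        (θ • (R (x * H i) * F (n - i) * x) - R (R (x * H i) * F (n - i) * x)) +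
          R (x * (H i * (θ • (F (n - i) * x) - R (F (n - i) * x)))) := by
    intro i _
    rw [id1 (x * H i) (F (n - i) * x)]
    simp only [mul_assoc]
  rw [Finset.sum_congr rfl step, Finset.sum_add_distrib, Finset.sum_sub_distrib,
    ← Finset.smul_sum, ← map_sum, ← Finset.sum_mul, ← hF, ← map_sum, ← Finset.mul_sum, ← hH]
  abel

theorem atkinson_factorisation {k A : Type*} [Field k] [CharZero k] [Ring A] [Algebra k A]
    (θ : k) (R : A →ₗ[k] A)
    (hR : ∀ a b : A, R a * R b = R (R a * b + a * R b - θ • (a * b)))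
    (Rext Rtext : PowerSeries A → PowerSeries A)
    (hRext : ∀ (F : PowerSeries A) (n : ℕ),
      PowerSeries.coeff n (Rext F) = R (PowerSeries.coeff n F))
    (hRtext : ∀ (F : PowerSeries A) (n : ℕ),
      PowerSeries.coeff n (Rtext F) =
        θ • PowerSeries.coeff n F - R (PowerSeries.coeff n F))
    (x : A) (f h : PowerSeries A)
    (hf : f = 1 + PowerSeries.X * Rext (f * PowerSeries.C x))
    (hh : h = 1 + PowerSeries.X * Rtext (PowerSeries.C x * h)) :
    (1 : PowerSeries A) - θ • (PowerSeries.X * PowerSeries.C x) =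
      (1 - PowerSeries.X * Rext (PowerSeries.C x * h)) *
        (1 - PowerSeries.X * Rtext (f * PowerSeries.C x)) := by
  set F : ℕ → A := fun n => coeff n f with hFdef
  set H : ℕ → A := fun n => coeff n h with hHdef
  have hF0 : F 0 = 1 := by
    show coeff 0 f = 1
    rw [hf]; simp
  have hH0 : H 0 = 1 := by
    show coeff 0 h = 1
    rw [hh]; simp
  have hFs : ∀ n, F (n + 1) = R (F n * x) := by
    intro n
    have := congrArg (coeff (n + 1)) hf
    simpa [coeff_succ_X_mul, hRext, coeff_mul_C, coeff_one] using this
  have hHs : ∀ n, H (n + 1) = θ • (x * H n) - R (x * H n) := by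
    intro n
    have := congrArg (coeff (n + 1)) hh
    simpa [coeff_succ_X_mul, hRtext, coeff_C_mul, coeff_one] using this
  set P : PowerSeries A := Rext (PowerSeries.C x * h) with hPdef
  set Q : PowerSeries A := Rtext (f * PowerSeries.C x) with hQdef
  have hPc : ∀ n, coeff n P = R (x * H n) := by
    intro n; rw [hPdef, hRext, coeff_C_mul]
  have hQc : ∀ n, coeff n Q = θ • (F n * x) - R (F n * x) := by
    intro n; rw [hQdef, hRtext, coeff_mul_C]
  have expand : (1 - X * P) * (1 - X * Q) =
      1 - X * Q - X * P + X * (X * (P * Q)) := by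
    have hc : X * P * (X * Q) = X * (X * (P * Q)) := by
      rw [mul_assoc, ← mul_assoc P X Q, (PowerSeries.commute_X P).eq, mul_assoc X P Q]
    rw [← hc]; noncomm_ring
  rw [expand]
  ext n
  match n with
  | 0 => simp [coeff_zero_eq_constantCoeff]
  | 1 =>
      simp only [map_sub, map_add, map_smul, coeff_one, coeff_succ_X_mul,
        coeff_zero_mul_X, hPc, hQc]
      simp [PowerSeries.coeff_C, hF0, hH0, coeff_zero_eq_constantCoeff]
  | (n + 2) =>
      have key := atkinson_aux2 θ R hR x F H hF0 hH0 hFs hHs n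
      simp only [map_sub, map_add, map_smul, coeff_one, coeff_succ_X_mul, PowerSeries.coeff_C]
      rw [PowerSeries.coeff_mul, Finset.Nat.sum_antidiagonal_eq_sum_range_succ_mk]
      simp only [hPc, hQc]
      rw [← key]
      simp [PowerSeries.coeff_X]
      abel
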